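/- Let α, β > 0, p, c ∈ (0,1], and β > ln(2(1 + c·p·e^{-α})/(1 - e^{-α})). Then the quantity A = e^{-β} + c·p·e^{-α-β} - e^{-2β} - c·p·e^{-2α-β} - c²·p·e^{-α-3β} - c³·p²·e^{-2α-3β} - (1-c)·c·p·e^{-α-2β} - (1-c)·c²·p²·e^{-2α-2β} is strictly positive. -/
import Mathlib


set_option maxHeartbeats 1000000 in
theorem stmt17 (p c α β : ℝ)
    (hp : 0 < p) (hp1 : p ≤ 1) (hc : 0 < c) (hc1 : c ≤ 1)
    (hα : 0 < α)
    (hβ : Real.log (2 * (1 + c * p * Real.exp (-α)) / (1 - Real.exp (-α))) < β) :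
    0 < Real.exp (-β) + c * p * Real.exp (-α - β)
        - Real.exp (-2 * β) - c * p * Real.exp (-2 * α - β)
        - c ^ 2 * p * Real.exp (-α - 3 * β)
        - c ^ 3 * p ^ 2 * Real.exp (-2 * α - 3 * β)
        - (1 - c) * c * p * Real.exp (-α - 2 * β)
        - (1 - c) * c ^ 2 * p ^ 2 * Real.exp (-2 * α - 2 * β) := by
  set a := Real.exp (-α) with ha
  set x := Real.exp (-β) with hx
  have ha0 : 0 < a := Real.exp_pos _
  have ha1 : a < 1 := by
    rw [ha]; exact Real.exp_lt_one_iff.mpr (by linarith)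
  have hx0 : 0 < x := Real.exp_pos _
  have hM0 : 0 < 2 * (1 + c * p * a) / (1 - a) := by
    apply div_pos <;> nlinarith [mul_pos hc hp, mul_pos (mul_pos hc hp) ha0]
  have hMx : 2 * (1 + c * p * a) / (1 - a) < Real.exp β := by
    calc 2 * (1 + c * p * a) / (1 - a)
        = Real.exp (Real.log (2 * (1 + c * p * a) / (1 - a))) := (Real.exp_log hM0).symm
      _ < Real.exp β := Real.exp_lt_exp.mpr hβ
  have hkey : x * (2 * (1 + c * p * a)) < 1 - a := by
    have hxe : x = (Real.exp β)⁻¹ := by rw [hx, ← Real.exp_neg]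
    rw [hxe]
    rw [div_lt_iff₀ (by linarith)] at hMx
    have he : 0 < Real.exp β := Real.exp_pos _
    rw [inv_mul_eq_div, div_lt_iff₀ he]
    nlinarith
  have hx1 : x < 1 := by
    nlinarith [mul_pos (mul_pos hc hp) ha0]
  have e1 : Real.exp (-α - β) = a * x := by rw [ha, hx, ← Real.exp_add]; ring_nf
  have e2 : Real.exp (-2 * β) = x ^ 2 := by
    rw [hx, ← Real.exp_nat_mul]; ring_nf
  have e3 : Real.exp (-2 * α - β) = a ^ 2 * x := by
    rw [ha, hx, ← Real.exp_nat_mul, ← Real.exp_add]; ring_nf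
  have e4 : Real.exp (-α - 3 * β) = a * x ^ 3 := by
    rw [ha, hx, ← Real.exp_nat_mul, ← Real.exp_add]; ring_nf
  have e5 : Real.exp (-2 * α - 3 * β) = a ^ 2 * x ^ 3 := by
    rw [ha, hx, ← Real.exp_nat_mul, ← Real.exp_nat_mul, ← Real.exp_add]; ring_nf
  have e6 : Real.exp (-α - 2 * β) = a * x ^ 2 := by
    rw [ha, hx, ← Real.exp_nat_mul, ← Real.exp_add]; ring_nf
  have e7 : Real.exp (-2 * α - 2 * β) = a ^ 2 * x ^ 2 := by
    rw [ha, hx, ← Real.exp_nat_mul, ← Real.exp_nat_mul, ← Real.exp_add]; ring_nf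
  rw [e1, e2, e3, e4, e5, e6, e7]
  have hx3 : x ^ 3 ≤ x ^ 2 := by nlinarith
  have hcp : c ^ 2 * p ^ 2 * a ^ 2 ≤ c * p * a := by
    have hcp1 : c * p ≤ 1 := by nlinarith
    have ht : c * p * a ≤ 1 := by nlinarith
    nlinarith [mul_pos (mul_pos hc hp) ha0]
  have hmul : x * (x * (2 * (1 + c * p * a))) < x * (1 - a) :=
    mul_lt_mul_of_pos_left hkey hx0
  have h1 : c ^ 2 * p * a * x ^ 3 ≤ c ^ 2 * p * a * x ^ 2 :=
    mul_le_mul_of_nonneg_left hx3 (by positivity)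
  have h2 : c ^ 3 * p ^ 2 * a ^ 2 * x ^ 3 ≤ c ^ 3 * p ^ 2 * a ^ 2 * x ^ 2 :=
    mul_le_mul_of_nonneg_left hx3 (by positivity)
  have h3 : c ^ 2 * p ^ 2 * a ^ 2 * x ^ 2 ≤ c * p * a * x ^ 2 :=
    mul_le_mul_of_nonneg_right hcp (sq_nonneg x)
  have h5 : c * p * a ^ 2 * x ≤ c * p * a * x := by
    have : a ^ 2 ≤ a := by nlinarith
    nlinarith [mul_pos (mul_pos hc hp) hx0]
  have h6 : 0 < a * x := mul_pos ha0 hx0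
  linarith [h1, h2, h3, h5, h6, hmul, sq_nonneg x]
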